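/- Let Δ_1, Δ_2, Δ_3, Δ_4 be odd positive integers, let □_1, □_2, □_3 be even positive integers with Δ_1 + Δ_2 + Δ_3 + Δ_4 = □_1 + □_2 + □_3, and let k be a positive integer with Δ_j ≤ 2k − 1 for all j and 2k ≤ □_i for all i. Set A = ∑_{j=1}^{4} (2k − Δ_j − 1) and B = 2k + ∑_{i=1}^{3} (□_i − 2k). Then (X − Complex.I)^2 divides the polynomial X^B · ∏_{j=1}^{4} P_{2k−Δ_j} − X^A · P_{2k+1} · ∏_{i=1}^{3} P_{□_i−2k+1} in ℂ[X]. (Equivalently: the Laurent polynomial ∏_{j=1}^{4} [2k − Δ_j] − [2k+1] · ∏_{i=1}^{3} [□_i − 2k + 1] vanishes at q = i to order at least 2.) -/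

import Mathlib

open Polynomial Finset

/-- The polynomial form `P_n(X) = ∑_{k=0}^{n-1} X^{2k}` of the quantum integer `[n]`. -/
noncomputable def quantumP (n : ℕ) : Polynomial ℂ :=
  ∑ k ∈ Finset.range n, Polynomial.X ^ (2 * k)

lemma quantumP_eval_I {n : ℕ} (hn : Odd n) : (quantumP n).eval Complex.I = 1 := by
  simp only [quantumP, eval_finset_sum, eval_pow, eval_X, pow_mul, Complex.I_sq]
  rw [neg_one_geom_sum, if_neg (by simpa using hn)]

lemma altsum (n : ℕ) :
    ∑ m ∈ Finset.range n, (m : ℂ) * (-1) ^ m = ((-1) ^ (n + 1) * (2 * n - 1) - 1) / 4 := by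
  induction n with
  | zero => norm_num
  | succ n ih =>
    rw [Finset.sum_range_succ, ih]
    push_cast
    ring

lemma quantumP_deriv_eval_I {n : ℕ} (hn : Odd n) :
    (derivative (quantumP n)).eval Complex.I = -Complex.I * ((n : ℂ) - 1) := by
  have step : ∀ m : ℕ, (2 * m : ℂ) * Complex.I ^ (2 * m - 1)
      = (m : ℂ) * (-1) ^ m * (-2 * Complex.I) := by
    rintro (_ | m)
    · simp
    · have : 2 * (m + 1) - 1 = 2 * m + 1 := by omega
      rw [this, pow_succ, pow_mul, Complex.I_sq]
      push_cast
      ring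
  have : (derivative (quantumP n)).eval Complex.I
      = ∑ m ∈ Finset.range n, (2 * m : ℂ) * Complex.I ^ (2 * m - 1) := by
    simp [quantumP, derivative_sum, eval_finset_sum, derivative_X_pow]
  rw [this, Finset.sum_congr rfl fun m _ => step m, ← Finset.sum_mul, altsum,
    Even.neg_one_pow (Odd.add_one hn)]
  field_simp
  ring

lemma sq_dvd_of_isRoot {p : Polynomial ℂ} {a : ℂ} (h0 : p.eval a = 0)
    (h1 : (derivative p).eval a = 0) : (X - C a) ^ 2 ∣ p := by
  rcases eq_or_ne p 0 with rfl | hp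
  · simp
  · exact (pow_dvd_pow _ ((Polynomial.one_lt_rootMultiplicity_iff_isRoot hp).2
      ⟨h0, h1⟩)).trans (Polynomial.pow_rootMultiplicity_dvd p a)

lemma I_pow_mod (n : ℕ) : Complex.I ^ n = Complex.I ^ (n % 4) := by
  conv_lhs => rw [← Nat.div_add_mod n 4]
  rw [pow_add, pow_mul, Complex.I_pow_four, one_pow, one_mul]

lemma cast_mul_I_pow_pred (n : ℕ) :
    (n : ℂ) * Complex.I ^ (n - 1) = (n : ℂ) * (-Complex.I * Complex.I ^ n) := by
  rcases n with _ | n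
  · simp
  · rw [Nat.add_sub_cancel, pow_succ]
    push_cast
    ring_nf
    rw [Complex.I_sq]
    ring

lemma key (a0 a1 a2 a3 c b0 b1 b2 A B : ℕ)
    (h0 : Odd a0) (h1 : Odd a1) (h2 : Odd a2) (h3 : Odd a3)
    (hc : Odd c) (g0 : Odd b0) (g1 : Odd b1) (g2 : Odd b2)
    (hA : A + 4 = a0 + a1 + a2 + a3) (hB : B + 4 = c + b0 + b1 + b2)
    (hmod : A % 4 = B % 4) :
    ((Polynomial.X : Polynomial ℂ) - Polynomial.C Complex.I) ^ 2 ∣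
      (Polynomial.X : Polynomial ℂ) ^ B * (quantumP a0 * quantumP a1 * quantumP a2 * quantumP a3)
        - (Polynomial.X : Polynomial ℂ) ^ A *
            (quantumP c * (quantumP b0 * quantumP b1 * quantumP b2)) := by
  have hIAB : Complex.I ^ A = Complex.I ^ B := by rw [I_pow_mod A, I_pow_mod B, hmod]
  apply sq_dvd_of_isRoot
  · simp [quantumP_eval_I, h0, h1, h2, h3, hc, g0, g1, g2, hIAB]
  · have hAc : (A : ℂ) = (a0 : ℂ) + a1 + a2 + a3 - 4 := by
      have : ((A + 4 : ℕ) : ℂ) = ((a0 + a1 + a2 + a3 : ℕ) : ℂ) := by rw [hA]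
      push_cast at this; linear_combination this
    have hBc : (B : ℂ) = (c : ℂ) + b0 + b1 + b2 - 4 := by
      have : ((B + 4 : ℕ) : ℂ) = ((c + b0 + b1 + b2 : ℕ) : ℂ) := by rw [hB]
      push_cast at this; linear_combination this
    simp only [derivative_sub, derivative_mul, derivative_pow, derivative_X, eval_sub, eval_add,
      eval_mul, eval_pow, eval_X, eval_natCast, mul_one, eval_C]
    rw [quantumP_eval_I h0, quantumP_eval_I h1, quantumP_eval_I h2, quantumP_eval_I h3,
      quantumP_eval_I hc, quantumP_eval_I g0, quantumP_eval_I g1, quantumP_eval_I g2,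
      quantumP_deriv_eval_I h0, quantumP_deriv_eval_I h1, quantumP_deriv_eval_I h2,
      quantumP_deriv_eval_I h3, quantumP_deriv_eval_I hc, quantumP_deriv_eval_I g0,
      quantumP_deriv_eval_I g1, quantumP_deriv_eval_I g2,
      cast_mul_I_pow_pred A, cast_mul_I_pow_pred B, hIAB, hAc, hBc]
    ring

/-- If `Δ_1, …, Δ_4` are odd positive, `□_1, □_2, □_3` are even positive with
`∑ Δ_j = ∑ □_i`, and `k` is a positive integer with `Δ_j ≤ 2k − 1` and `2k ≤ □_i`,
then the Laurent polynomial `∏_j [2k − Δ_j] − [2k+1] · ∏_i [□_i − 2k + 1]` vanishes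
at `q = i` to order at least `2`: in polynomial form `(X − i)^2` divides
`X^B ∏_j P_{2k−Δ_j} − X^A P_{2k+1} ∏_i P_{□_i−2k+1}` where
`A = ∑_j (2k − Δ_j − 1)` and `B = 2k + ∑_i (□_i − 2k)`. -/
theorem tet_cancellation (Δ : Fin 4 → ℕ) (Sq : Fin 3 → ℕ) (k : ℕ)
    (hΔodd : ∀ j, Odd (Δ j)) (hΔpos : ∀ j, 0 < Δ j)
    (hSqeven : ∀ i, Even (Sq i)) (hSqpos : ∀ i, 0 < Sq i)
    (hsum : ∑ j, Δ j = ∑ i, Sq i)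
    (hk : 0 < k) (hΔk : ∀ j, Δ j ≤ 2 * k - 1) (hkSq : ∀ i, 2 * k ≤ Sq i) :
    ((Polynomial.X : Polynomial ℂ) - Polynomial.C Complex.I) ^ 2 ∣
      (Polynomial.X : Polynomial ℂ) ^ (2 * k + ∑ i, (Sq i - 2 * k)) *
          ∏ j, quantumP (2 * k - Δ j) -
        (Polynomial.X : Polynomial ℂ) ^ (∑ j, (2 * k - Δ j - 1)) *
          (quantumP (2 * k + 1) * ∏ i, quantumP (Sq i - 2 * k + 1)) := by
  obtain ⟨d0, hd0⟩ := hΔodd 0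
  obtain ⟨d1, hd1⟩ := hΔodd 1
  obtain ⟨d2, hd2⟩ := hΔodd 2
  obtain ⟨d3, hd3⟩ := hΔodd 3
  obtain ⟨e0, he0⟩ := hSqeven 0
  obtain ⟨e1, he1⟩ := hSqeven 1
  obtain ⟨e2, he2⟩ := hSqeven 2
  have hk0 := hΔk 0; have hk1 := hΔk 1; have hk2 := hΔk 2; have hk3 := hΔk 3
  have hs0 := hkSq 0; have hs1 := hkSq 1; have hs2 := hkSq 2
  rw [Fin.sum_univ_four, Fin.sum_univ_three] at hsum ⊢
  rw [Fin.prod_univ_four, Fin.prod_univ_three]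
  exact key _ _ _ _ _ _ _ _ _ _
    ⟨k - d0 - 1, by omega⟩ ⟨k - d1 - 1, by omega⟩ ⟨k - d2 - 1, by omega⟩ ⟨k - d3 - 1, by omega⟩
    ⟨k, rfl⟩ ⟨e0 - k, by omega⟩ ⟨e1 - k, by omega⟩ ⟨e2 - k, by omega⟩
    (by omega) (by omega) (by omega)
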